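/- arXiv:2109.14926 — 7 statements merged into one kernel-verified Lean document; each statement's English description precedes it below -/
import Mathlib

section
/- Let σ : Λ → ℂ be conjugate-symmetric, Ψ : Z_N² → ℝ strictly positive, q ∈ ℒ₊, and let Δ : Λ → ℂ be conjugate-symmetric. Then the real function t ↦ J(q + tΔ) is differentiable at t = 0 with derivative equal to Σ_{k∈Λ} Δ_k · conj(σ_k) − (1/(N₁N₂)) Σ_{ℓ∈Z_N²} Δ(ζ_ℓ) / (1/Ψ(ℓ) + Q(ζ_ℓ)), where Δ(ζ_ℓ) = Σ_{k∈Λ} Δ_k exp(−i(k₁ζ_{ℓ,1} + k₂ζ_{ℓ,2})). -/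
open Complex BigOperators

noncomputable section

/-- The index set `Λ = {k ∈ ℤ² : |k₁| ≤ n₁, |k₂| ≤ n₂}`. -/
def Lam (n₁ n₂ : ℕ) : Finset (ℤ × ℤ) :=
  Finset.Icc (-(n₁ : ℤ)) (n₁ : ℤ) ×ˢ Finset.Icc (-(n₂ : ℤ)) (n₂ : ℤ)

/-- The discrete grid `Z_N² = {0,…,N₁−1} × {0,…,N₂−1}`. -/
def gridN (N₁ N₂ : ℕ) : Finset (ℕ × ℕ) := Finset.range N₁ ×ˢ Finset.range N₂

/-- The grid point `ζ_ℓ = (2πℓ₁/N₁, 2πℓ₂/N₂)`. -/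
def zeta (N₁ N₂ : ℕ) (ℓ : ℕ × ℕ) : ℝ × ℝ :=
  (2 * Real.pi * ℓ.1 / N₁, 2 * Real.pi * ℓ.2 / N₂)

/-- Conjugate symmetry of coefficients: `q₋ₖ = conj qₖ` for all `k ∈ Λ`. -/
def ConjSym (n₁ n₂ : ℕ) (q : ℤ × ℤ → ℂ) : Prop :=
  ∀ k ∈ Lam n₁ n₂, q (-k) = starRingEnd ℂ (q k)

/-- The trigonometric polynomial `Q(θ) = Σ_{k∈Λ} qₖ exp(−i(k₁θ₁ + k₂θ₂))`. -/
def trigQ (n₁ n₂ : ℕ) (q : ℤ × ℤ → ℂ) (θ : ℝ × ℝ) : ℂ :=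
  ∑ k ∈ Lam n₁ n₂, q k *
    Complex.exp (-Complex.I * (((k.1 : ℝ) * θ.1 + (k.2 : ℝ) * θ.2 : ℝ) : ℂ))

/-- The dual objective `J(q)`, real-valued on the feasible set. -/
def Jdual (n₁ n₂ N₁ N₂ : ℕ) (σ : ℤ × ℤ → ℂ) (Ψ : ℕ × ℕ → ℝ) (q : ℤ × ℤ → ℂ) : ℝ :=
  (∑ k ∈ Lam n₁ n₂, q k * starRingEnd ℂ (σ k)).re -
    (1 / ((N₁ : ℝ) * (N₂ : ℝ))) * ∑ ℓ ∈ gridN N₁ N₂,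
      Real.log (1 / Ψ ℓ + (trigQ n₁ n₂ q (zeta N₁ N₂ ℓ)).re)

/-- Membership in the feasible set `ℒ₊`. -/
def Feas (n₁ n₂ N₁ N₂ : ℕ) (Ψ : ℕ × ℕ → ℝ) (q : ℤ × ℤ → ℂ) : Prop :=
  ConjSym n₁ n₂ q ∧
    ∀ ℓ ∈ gridN N₁ N₂, 0 < 1 / Ψ ℓ + (trigQ n₁ n₂ q (zeta N₁ N₂ ℓ)).re

theorem stmt6 (n₁ n₂ N₁ N₂ : ℕ) (hn₁ : 0 < n₁) (hn₂ : 0 < n₂)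
    (hN₁ : 0 < N₁) (hN₂ : 0 < N₂)
    (σ : ℤ × ℤ → ℂ) (hσ : ConjSym n₁ n₂ σ)
    (Ψ : ℕ × ℕ → ℝ) (hΨ : ∀ ℓ ∈ gridN N₁ N₂, 0 < Ψ ℓ)
    (q : ℤ × ℤ → ℂ) (hq : Feas n₁ n₂ N₁ N₂ Ψ q)
    (Δ : ℤ × ℤ → ℂ) (hΔ : ConjSym n₁ n₂ Δ) :
    HasDerivAt (fun t : ℝ => Jdual n₁ n₂ N₁ N₂ σ Ψ (fun k => q k + (t : ℂ) * Δ k))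
      ((∑ k ∈ Lam n₁ n₂, Δ k * starRingEnd ℂ (σ k)).re -
        (1 / ((N₁ : ℝ) * (N₂ : ℝ))) * ∑ ℓ ∈ gridN N₁ N₂,
          (trigQ n₁ n₂ Δ (zeta N₁ N₂ ℓ)).re /
            (1 / Ψ ℓ + (trigQ n₁ n₂ q (zeta N₁ N₂ ℓ)).re))
      0 := by
  obtain ⟨hqs, hqpos⟩ := hq
  set c : ℝ := 1 / ((N₁ : ℝ) * (N₂ : ℝ)) with hc
  set A : ℕ × ℕ → ℝ := fun ℓ => 1 / Ψ ℓ + (trigQ n₁ n₂ q (zeta N₁ N₂ ℓ)).re with hA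
  set B : ℕ × ℕ → ℝ := fun ℓ => (trigQ n₁ n₂ Δ (zeta N₁ N₂ ℓ)).re with hB
  set C : ℝ := (∑ k ∈ Lam n₁ n₂, q k * starRingEnd ℂ (σ k)).re with hC
  set D : ℝ := (∑ k ∈ Lam n₁ n₂, Δ k * starRingEnd ℂ (σ k)).re with hD
  have hS : ∀ (t : ℝ) (θ : ℝ × ℝ),
      trigQ n₁ n₂ (fun k => q k + (t : ℂ) * Δ k) θ
        = trigQ n₁ n₂ q θ + (t : ℂ) * trigQ n₁ n₂ Δ θ := by
    intro t θ
    simp [trigQ, add_mul, Finset.sum_add_distrib, Finset.mul_sum, mul_assoc]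
  have hfun : (fun t : ℝ => Jdual n₁ n₂ N₁ N₂ σ Ψ (fun k => q k + (t : ℂ) * Δ k))
      = fun t : ℝ => (C + t * D)
        - c * ∑ ℓ ∈ gridN N₁ N₂, Real.log (A ℓ + t * B ℓ) := by
    funext t
    unfold Jdual
    congr 1
    · rw [hC, hD, ← Complex.re_ofReal_mul, ← Complex.add_re]
      congr 1
      rw [Finset.mul_sum, ← Finset.sum_add_distrib]
      apply Finset.sum_congr rfl
      intro k _
      ring
    · congr 1
      apply Finset.sum_congr rfl
      intro ℓ _
      congr 1
      rw [hS, Complex.add_re, Complex.re_ofReal_mul, hA, hB]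
      ring
  rw [hfun]
  have h1 : HasDerivAt (fun t : ℝ => C + t * D) D 0 := by
    simpa using ((hasDerivAt_id (0 : ℝ)).mul_const D).const_add C
  have h2 : HasDerivAt (fun t : ℝ => c * ∑ ℓ ∈ gridN N₁ N₂, Real.log (A ℓ + t * B ℓ))
      (c * ∑ ℓ ∈ gridN N₁ N₂, B ℓ / A ℓ) 0 := by
    apply HasDerivAt.const_mul
    apply HasDerivAt.fun_sum
    intro ℓ hℓ
    have hAℓ : 0 < A ℓ := hqpos ℓ hℓ
    have hlin : HasDerivAt (fun t : ℝ => A ℓ + t * B ℓ) (B ℓ) 0 := by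
      simpa using ((hasDerivAt_id (0 : ℝ)).mul_const (B ℓ)).const_add (A ℓ)
    have := hlin.log (by simpa using hAℓ.ne')
    simpa using this
  exact h1.sub h2

end
end

section
/- Let σ : Λ → ℂ be conjugate-symmetric, Ψ : Z_N² → ℝ strictly positive, q ∈ ℒ₊, and let Δ : Λ → ℂ be conjugate-symmetric. Then the second derivative at t = 0 of the real function t ↦ J(q + tΔ) exists and equals (1/(N₁N₂)) Σ_{ℓ∈Z_N²} Δ(ζ_ℓ)² / (1/Ψ(ℓ) + Q(ζ_ℓ))², where Δ(ζ_ℓ) = Σ_{k∈Λ} Δ_k exp(−i(k₁ζ_{ℓ,1} + k₂ζ_{ℓ,2})); in particular this second derivative is nonnegative. -/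
open Complex BigOperators

noncomputable section

theorem stmt7 (n₁ n₂ N₁ N₂ : ℕ) (hn₁ : 0 < n₁) (hn₂ : 0 < n₂)
    (hN₁ : 0 < N₁) (hN₂ : 0 < N₂)
    (σ : ℤ × ℤ → ℂ) (hσ : ConjSym n₁ n₂ σ)
    (Ψ : ℕ × ℕ → ℝ) (hΨ : ∀ ℓ ∈ gridN N₁ N₂, 0 < Ψ ℓ)
    (q : ℤ × ℤ → ℂ) (hq : Feas n₁ n₂ N₁ N₂ Ψ q)
    (Δ : ℤ × ℤ → ℂ) (hΔ : ConjSym n₁ n₂ Δ) :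
    -- the value of the second derivative
    let d : ℝ := (1 / ((N₁ : ℝ) * (N₂ : ℝ))) * ∑ ℓ ∈ gridN N₁ N₂,
      (trigQ n₁ n₂ Δ (zeta N₁ N₂ ℓ)).re ^ 2 /
        (1 / Ψ ℓ + (trigQ n₁ n₂ q (zeta N₁ N₂ ℓ)).re) ^ 2
    HasDerivAt
      (deriv fun t : ℝ => Jdual n₁ n₂ N₁ N₂ σ Ψ (fun k => q k + (t : ℂ) * Δ k))
      d 0 ∧ 0 ≤ d := by
  intro d
  -- abbreviations
  set c : ℕ × ℕ → ℝ := fun ℓ => 1 / Ψ ℓ + (trigQ n₁ n₂ q (zeta N₁ N₂ ℓ)).re with hc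
  set dd : ℕ × ℕ → ℝ := fun ℓ => (trigQ n₁ n₂ Δ (zeta N₁ N₂ ℓ)).re with hdd
  set A : ℝ := (∑ k ∈ Lam n₁ n₂, q k * starRingEnd ℂ (σ k)).re with hA
  set B : ℝ := (∑ k ∈ Lam n₁ n₂, Δ k * starRingEnd ℂ (σ k)).re with hB
  have hcpos : ∀ ℓ ∈ gridN N₁ N₂, 0 < c ℓ := hq.2
  -- the objective along the line, explicitly
  have hf : (fun t : ℝ => Jdual n₁ n₂ N₁ N₂ σ Ψ (fun k => q k + (t : ℂ) * Δ k)) =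
      fun t : ℝ => A + t * B - (1 / ((N₁ : ℝ) * (N₂ : ℝ))) *
        ∑ ℓ ∈ gridN N₁ N₂, Real.log (c ℓ + t * dd ℓ) := by
    funext t
    have htrig : ∀ θ : ℝ × ℝ, trigQ n₁ n₂ (fun k => q k + (t : ℂ) * Δ k) θ =
        trigQ n₁ n₂ q θ + (t : ℂ) * trigQ n₁ n₂ Δ θ := by
      intro θ
      simp only [trigQ, add_mul, Finset.sum_add_distrib, Finset.mul_sum, mul_assoc]
    have hlin : (∑ k ∈ Lam n₁ n₂, (q k + (t : ℂ) * Δ k) * starRingEnd ℂ (σ k)).re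
        = A + t * B := by
      simp [add_mul, Finset.sum_add_distrib, ← Finset.mul_sum, mul_assoc,
        Complex.re_ofReal_mul, hA, hB]
    simp only [Jdual, hlin, htrig]
    congr 2
    apply Finset.sum_congr rfl
    intro ℓ _
    simp [hc, hdd, Complex.add_re, Complex.re_ofReal_mul]
    ring_nf
  rw [hf]
  -- eventual positivity near 0
  have hev : ∀ᶠ t : ℝ in nhds 0, ∀ ℓ ∈ gridN N₁ N₂, 0 < c ℓ + t * dd ℓ := by
    rw [Filter.eventually_all_finset]
    intro ℓ hℓ
    have h1 : Filter.Tendsto (fun t : ℝ => c ℓ + t * dd ℓ) (nhds 0) (nhds (c ℓ)) := by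
      have hcont : Continuous (fun t : ℝ => c ℓ + t * dd ℓ) := by fun_prop
      simpa using hcont.tendsto (0 : ℝ)
    exact h1.eventually (eventually_gt_nhds (hcpos ℓ hℓ))
  -- the first derivative function near 0
  set G : ℝ → ℝ := fun t => B - (1 / ((N₁ : ℝ) * (N₂ : ℝ))) *
    ∑ ℓ ∈ gridN N₁ N₂, dd ℓ / (c ℓ + t * dd ℓ) with hG
  have hderiv : (deriv fun t : ℝ => A + t * B - (1 / ((N₁ : ℝ) * (N₂ : ℝ))) *
      ∑ ℓ ∈ gridN N₁ N₂, Real.log (c ℓ + t * dd ℓ)) =ᶠ[nhds 0] G := by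
    filter_upwards [hev] with t ht
    have h1 : HasDerivAt (fun t : ℝ => A + t * B - (1 / ((N₁ : ℝ) * (N₂ : ℝ))) *
        ∑ ℓ ∈ gridN N₁ N₂, Real.log (c ℓ + t * dd ℓ)) (G t) t := by
      have hsum : HasDerivAt (fun t : ℝ => ∑ ℓ ∈ gridN N₁ N₂, Real.log (c ℓ + t * dd ℓ))
          (∑ ℓ ∈ gridN N₁ N₂, dd ℓ / (c ℓ + t * dd ℓ)) t := by
        apply HasDerivAt.fun_sum
        intro ℓ hℓ
        have haff : HasDerivAt (fun t : ℝ => c ℓ + t * dd ℓ) (dd ℓ) t := by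
          simpa using ((hasDerivAt_id t).mul_const (dd ℓ)).const_add (c ℓ)
        exact haff.log (ne_of_gt (ht ℓ hℓ))
      have h0 : HasDerivAt (fun t : ℝ => A + t * B) B t := by
        simpa using ((hasDerivAt_id t).mul_const B).const_add A
      exact h0.sub (hsum.const_mul (1 / ((N₁ : ℝ) * (N₂ : ℝ))))
    exact h1.deriv
  -- second derivative: differentiate G at 0
  have hG0 : HasDerivAt G d 0 := by
    have hsum : HasDerivAt (fun t : ℝ => ∑ ℓ ∈ gridN N₁ N₂, dd ℓ / (c ℓ + t * dd ℓ))
        (∑ ℓ ∈ gridN N₁ N₂, -(dd ℓ ^ 2 / c ℓ ^ 2)) 0 := by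
      apply HasDerivAt.fun_sum
      intro ℓ hℓ
      have haff : HasDerivAt (fun t : ℝ => c ℓ + t * dd ℓ) (dd ℓ) 0 := by
        simpa using ((hasDerivAt_id (0:ℝ)).mul_const (dd ℓ)).const_add (c ℓ)
      have hne : c ℓ + 0 * dd ℓ ≠ 0 := by simpa using ne_of_gt (hcpos ℓ hℓ)
      have := (hasDerivAt_const (0:ℝ) (dd ℓ)).div haff hne
      convert this using 1
      rfl
      rfl
      simp [pow_two, neg_div]
    have := (hasDerivAt_const (0:ℝ) B).sub
      (hsum.const_mul (1 / ((N₁ : ℝ) * (N₂ : ℝ))))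
    convert this using 1
    rfl
    rfl
    rfl
    show (1 / ((N₁ : ℝ) * (N₂ : ℝ))) * (∑ ℓ ∈ gridN N₁ N₂, dd ℓ ^ 2 / c ℓ ^ 2) = _
    rw [Finset.sum_neg_distrib]
    ring
  refine ⟨hG0.congr_of_eventuallyEq hderiv, ?_⟩
  have : 0 ≤ ∑ ℓ ∈ gridN N₁ N₂, (trigQ n₁ n₂ Δ (zeta N₁ N₂ ℓ)).re ^ 2 /
      (1 / Ψ ℓ + (trigQ n₁ n₂ q (zeta N₁ N₂ ℓ)).re) ^ 2 :=
    Finset.sum_nonneg fun ℓ _ => div_nonneg (sq_nonneg _) (sq_nonneg _)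
  positivity
end
end

section
/- Let σ : Λ → ℂ be conjugate-symmetric and Ψ : Z_N² → ℝ strictly positive, and suppose the grid is fine enough that the only conjugate-symmetric q : Λ → ℂ with Q(ζ_ℓ) = 0 for all ℓ ∈ Z_N² is q = 0. Then the dual objective J is strictly convex on ℒ₊: for all q₁ ≠ q₂ in ℒ₊ and λ ∈ (0,1), J(λq₁ + (1−λ)q₂) < λ J(q₁) + (1−λ) J(q₂). -/
open Complex BigOperators

noncomputable section

lemma trigQ_linear (n₁ n₂ : ℕ) (a b : ℂ) (q₁ q₂ : ℤ × ℤ → ℂ) (θ : ℝ × ℝ) :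
    trigQ n₁ n₂ (fun k => a * q₁ k + b * q₂ k) θ
      = a * trigQ n₁ n₂ q₁ θ + b * trigQ n₁ n₂ q₂ θ := by
  simp only [trigQ, Finset.mul_sum, ← Finset.sum_add_distrib]
  refine Finset.sum_congr rfl fun k _ => by ring

lemma trigQ_sub (n₁ n₂ : ℕ) (q₁ q₂ : ℤ × ℤ → ℂ) (θ : ℝ × ℝ) :
    trigQ n₁ n₂ (fun k => q₁ k - q₂ k) θ = trigQ n₁ n₂ q₁ θ - trigQ n₁ n₂ q₂ θ := by
  simp only [trigQ, ← Finset.sum_sub_distrib]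
  refine Finset.sum_congr rfl fun k _ => by ring

lemma neg_mem_Lam {n₁ n₂ : ℕ} {k : ℤ × ℤ} (hk : k ∈ Lam n₁ n₂) : -k ∈ Lam n₁ n₂ := by
  simp only [Lam, Finset.mem_product, Finset.mem_Icc, Prod.fst_neg, Prod.snd_neg] at *
  omega

lemma trigQ_conj_eq (n₁ n₂ : ℕ) {q : ℤ × ℤ → ℂ} (hq : ConjSym n₁ n₂ q) (θ : ℝ × ℝ) :
    starRingEnd ℂ (trigQ n₁ n₂ q θ) = trigQ n₁ n₂ q θ := by
  rw [trigQ, map_sum]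
  refine Finset.sum_equiv (Equiv.neg (ℤ × ℤ))
    (fun k => ⟨fun hk => neg_mem_Lam hk, fun hk => by simpa using neg_mem_Lam hk⟩)
    (fun k hk => ?_)
  simp only [Equiv.neg_apply]
  rw [map_mul, hq k hk, ← Complex.exp_conj]
  congr 2
  simp only [Prod.fst_neg, Prod.snd_neg, Int.cast_neg, map_mul, map_neg,
    Complex.conj_I, Complex.conj_ofReal]
  push_cast
  ring

theorem stmt9 (n₁ n₂ N₁ N₂ : ℕ) (hn₁ : 0 < n₁) (hn₂ : 0 < n₂)
    (hN₁ : 0 < N₁) (hN₂ : 0 < N₂)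
    (σ : ℤ × ℤ → ℂ) (hσ : ConjSym n₁ n₂ σ)
    (Ψ : ℕ × ℕ → ℝ) (hΨ : ∀ ℓ ∈ gridN N₁ N₂, 0 < Ψ ℓ)
    -- the grid is fine enough: a conjugate-symmetric trigonometric polynomial
    -- vanishing on the whole grid has zero coefficients
    (hfine : ∀ q : ℤ × ℤ → ℂ, ConjSym n₁ n₂ q →
      (∀ ℓ ∈ gridN N₁ N₂, trigQ n₁ n₂ q (zeta N₁ N₂ ℓ) = 0) →
      ∀ k ∈ Lam n₁ n₂, q k = 0)
    (q₁ q₂ : ℤ × ℤ → ℂ)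
    (hq₁ : Feas n₁ n₂ N₁ N₂ Ψ q₁) (hq₂ : Feas n₁ n₂ N₁ N₂ Ψ q₂)
    (hne : ∃ k ∈ Lam n₁ n₂, q₁ k ≠ q₂ k)
    (lam : ℝ) (hlam : lam ∈ Set.Ioo (0 : ℝ) 1) :
    Jdual n₁ n₂ N₁ N₂ σ Ψ (fun k => (lam : ℂ) * q₁ k + ((1 - lam : ℝ) : ℂ) * q₂ k) <
      lam * Jdual n₁ n₂ N₁ N₂ σ Ψ q₁ + (1 - lam) * Jdual n₁ n₂ N₁ N₂ σ Ψ q₂ := by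
  obtain ⟨hlam0, hlam1⟩ := hlam
  have hμ : (0:ℝ) < 1 - lam := by linarith
  set a₁ : ℕ × ℕ → ℝ := fun ℓ => 1 / Ψ ℓ + (trigQ n₁ n₂ q₁ (zeta N₁ N₂ ℓ)).re with ha₁
  set a₂ : ℕ × ℕ → ℝ := fun ℓ => 1 / Ψ ℓ + (trigQ n₁ n₂ q₂ (zeta N₁ N₂ ℓ)).re with ha₂
  -- the combined q's a equals convex combination
  have hcomb : ∀ ℓ, 1 / Ψ ℓ + (trigQ n₁ n₂
      (fun k => (lam : ℂ) * q₁ k + ((1 - lam : ℝ) : ℂ) * q₂ k) (zeta N₁ N₂ ℓ)).re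
      = lam * a₁ ℓ + (1 - lam) * a₂ ℓ := by
    intro ℓ
    rw [trigQ_linear]
    simp only [ha₁, ha₂, Complex.add_re, Complex.mul_re, Complex.ofReal_re,
      Complex.ofReal_im]
    ring
  -- existence of a grid point where a₁ ≠ a₂
  have hexl : ∃ ℓ ∈ gridN N₁ N₂, a₁ ℓ ≠ a₂ ℓ := by
    by_contra h
    push_neg at h
    obtain ⟨k, hk, hkne⟩ := hne
    apply hkne
    have hcs : ConjSym n₁ n₂ (fun k => q₁ k - q₂ k) := by
      intro k hk
      simp only [hq₁.1 k hk, hq₂.1 k hk, map_sub]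
    have hz : ∀ ℓ ∈ gridN N₁ N₂, trigQ n₁ n₂ (fun k => q₁ k - q₂ k) (zeta N₁ N₂ ℓ) = 0 := by
      intro ℓ hℓ
      have hre : (trigQ n₁ n₂ (fun k => q₁ k - q₂ k) (zeta N₁ N₂ ℓ)).re = 0 := by
        rw [trigQ_sub]
        have := h ℓ hℓ
        simp only [ha₁, ha₂] at this
        simp [Complex.sub_re]
        linarith
      have him := trigQ_conj_eq n₁ n₂ hcs (zeta N₁ N₂ ℓ)
      rw [Complex.ext_iff] at him ⊢
      simp only [Complex.conj_re, Complex.conj_im, Complex.zero_re, Complex.zero_im] at *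
      constructor
      · exact hre
      · linarith [him.2]
    have := hfine _ hcs hz k hk
    exact sub_eq_zero.mp this
  -- positivity of a₁, a₂ on the grid
  have hpos₁ : ∀ ℓ ∈ gridN N₁ N₂, 0 < a₁ ℓ := hq₁.2
  have hpos₂ : ∀ ℓ ∈ gridN N₁ N₂, 0 < a₂ ℓ := hq₂.2
  -- strict inequality of the log sums
  have hlogsum : lam * (∑ ℓ ∈ gridN N₁ N₂, Real.log (a₁ ℓ))
      + (1 - lam) * (∑ ℓ ∈ gridN N₁ N₂, Real.log (a₂ ℓ))
      < ∑ ℓ ∈ gridN N₁ N₂, Real.log (lam * a₁ ℓ + (1 - lam) * a₂ ℓ) := by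
    rw [Finset.mul_sum, Finset.mul_sum, ← Finset.sum_add_distrib]
    refine Finset.sum_lt_sum (fun ℓ hℓ => ?_) ?_
    · rcases eq_or_ne (a₁ ℓ) (a₂ ℓ) with h | h
      · rw [h]
        have e1 : lam * a₂ ℓ + (1 - lam) * a₂ ℓ = a₂ ℓ := by ring
        have e2 : lam * Real.log (a₂ ℓ) + (1 - lam) * Real.log (a₂ ℓ)
            = Real.log (a₂ ℓ) := by ring
        rw [e1, e2]
      · exact le_of_lt (strictConcaveOn_log_Ioi.2 (hpos₁ ℓ hℓ) (hpos₂ ℓ hℓ) h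
          hlam0 hμ (by ring))
    · obtain ⟨ℓ, hℓ, hne'⟩ := hexl
      exact ⟨ℓ, hℓ, strictConcaveOn_log_Ioi.2 (hpos₁ ℓ hℓ) (hpos₂ ℓ hℓ) hne'
        hlam0 hμ (by ring)⟩
  -- linearity of the linear part
  have hlin : (∑ k ∈ Lam n₁ n₂,
      ((lam : ℂ) * q₁ k + ((1 - lam : ℝ) : ℂ) * q₂ k) * starRingEnd ℂ (σ k)).re
      = lam * (∑ k ∈ Lam n₁ n₂, q₁ k * starRingEnd ℂ (σ k)).re
        + (1 - lam) * (∑ k ∈ Lam n₁ n₂, q₂ k * starRingEnd ℂ (σ k)).re := by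
    have : ∑ k ∈ Lam n₁ n₂,
        ((lam : ℂ) * q₁ k + ((1 - lam : ℝ) : ℂ) * q₂ k) * starRingEnd ℂ (σ k)
        = (lam : ℂ) * ∑ k ∈ Lam n₁ n₂, q₁ k * starRingEnd ℂ (σ k)
          + ((1 - lam : ℝ) : ℂ) * ∑ k ∈ Lam n₁ n₂, q₂ k * starRingEnd ℂ (σ k) := by
      simp only [Finset.mul_sum, ← Finset.sum_add_distrib]
      exact Finset.sum_congr rfl fun k _ => by ring
    rw [this]
    simp [Complex.add_re, Complex.mul_re]
  have hc : (0:ℝ) < 1 / ((N₁ : ℝ) * (N₂ : ℝ)) := by positivity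
  simp only [Jdual, hlin]
  have hS : ∑ ℓ ∈ gridN N₁ N₂, Real.log (1 / Ψ ℓ + (trigQ n₁ n₂
      (fun k => (lam : ℂ) * q₁ k + ((1 - lam : ℝ) : ℂ) * q₂ k) (zeta N₁ N₂ ℓ)).re)
      = ∑ ℓ ∈ gridN N₁ N₂, Real.log (lam * a₁ ℓ + (1 - lam) * a₂ ℓ) :=
    Finset.sum_congr rfl fun ℓ _ => by rw [hcomb]
  rw [hS]
  nlinarith [hlogsum, hc]

end
end

section
/- Let σ : Λ → ℂ be conjugate-symmetric and Ψ : Z_N² → ℝ strictly positive, and let q̂ ∈ ℒ₊ with associated spectrum Φ̂(ℓ) = 1/(1/Ψ(ℓ) + Q̂(ζ_ℓ)). Then q̂ is a global minimizer of J on ℒ₊ if and only if Φ̂ satisfies the moment equations, i.e. σ_k = (1/(N₁N₂)) Σ_{ℓ∈Z_N²} exp(i(k₁ζ_{ℓ,1} + k₂ζ_{ℓ,2})) Φ̂(ℓ) for all k ∈ Λ. -/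
open Complex BigOperators
noncomputable section
/-- `Φ` satisfies the moment equations for covariance data `σ`. -/
def MomentEq (n₁ n₂ N₁ N₂ : ℕ) (σ : ℤ × ℤ → ℂ) (Φ : ℕ × ℕ → ℝ) : Prop :=
  ∀ k ∈ Lam n₁ n₂,
    σ k = ((1 / ((N₁ : ℝ) * (N₂ : ℝ)) : ℝ) : ℂ) * ∑ ℓ ∈ gridN N₁ N₂,
      Complex.exp (Complex.I *
        (((k.1 : ℝ) * (zeta N₁ N₂ ℓ).1 + (k.2 : ℝ) * (zeta N₁ N₂ ℓ).2 : ℝ) : ℂ)) *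
        ((Φ ℓ : ℝ) : ℂ)

/-- The spectrum `Φ̂ = (Ψ⁻¹ + Q̂)⁻¹` associated with dual variable `q`. -/
def PhiHat (n₁ n₂ N₁ N₂ : ℕ) (Ψ : ℕ × ℕ → ℝ) (q : ℤ × ℤ → ℂ) : ℕ × ℕ → ℝ :=
  fun ℓ => 1 / (1 / Ψ ℓ + (trigQ n₁ n₂ q (zeta N₁ N₂ ℓ)).re)

lemma trigQ_add (n₁ n₂ : ℕ) (q p : ℤ × ℤ → ℂ) (θ : ℝ × ℝ) :
    trigQ n₁ n₂ (fun j => q j + p j) θ = trigQ n₁ n₂ q θ + trigQ n₁ n₂ p θ := by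
  simp [trigQ, add_mul, Finset.sum_add_distrib]

lemma trigQ_smul (n₁ n₂ : ℕ) (t : ℂ) (p : ℤ × ℤ → ℂ) (θ : ℝ × ℝ) :
    trigQ n₁ n₂ (fun j => t * p j) θ = t * trigQ n₁ n₂ p θ := by
  simp [trigQ, Finset.mul_sum, mul_assoc]

lemma log_aux2 {u : ℝ} (hu : -(1/2 : ℝ) ≤ u) :
    u - 2 * u ^ 2 ≤ Real.log (1 + u) := by
  have h1 : (0:ℝ) < 1 + u := by linarith
  have h2 := Real.one_sub_inv_le_log_of_pos h1
  have h3 : u - 2 * u ^ 2 ≤ 1 - (1 + u)⁻¹ := by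
    have h4 : (1 + u)⁻¹ * (1 + u) = 1 := inv_mul_cancel₀ (ne_of_gt h1)
    nlinarith [sq_nonneg u, mul_pos (inv_pos.2 h1) h1]
  linarith

lemma key_real {ι : Type*} (s : Finset ι) (hne : s.Nonempty) (x y : ι → ℝ)
    (hx : ∀ ℓ ∈ s, 0 < x ℓ) (cN : ℝ) (hcN : 0 ≤ cN) (A : ℝ)
    (hJ : ∀ t : ℝ, (∀ ℓ ∈ s, 0 < x ℓ + t * y ℓ) →
      cN * ((∑ ℓ ∈ s, Real.log (x ℓ + t * y ℓ)) - ∑ ℓ ∈ s, Real.log (x ℓ)) ≤ t * A) :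
    A = cN * ∑ ℓ ∈ s, y ℓ / x ℓ := by
  set t₀ : ℝ := s.inf' hne (fun ℓ => x ℓ / (2 * (|y ℓ| + 1))) with ht₀def
  have ht₀ : 0 < t₀ := by
    rw [ht₀def, Finset.lt_inf'_iff]
    intro ℓ hℓ
    exact div_pos (hx ℓ hℓ) (by positivity)
  have hbound : ∀ t : ℝ, |t| ≤ t₀ → ∀ ℓ ∈ s, |t * y ℓ| ≤ x ℓ / 2 := by
    intro t ht ℓ hℓ
    have h1 : t₀ ≤ x ℓ / (2 * (|y ℓ| + 1)) := Finset.inf'_le _ hℓ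
    have h2 : (0:ℝ) < 2 * (|y ℓ| + 1) := by positivity
    have h3 : x ℓ / (2 * (|y ℓ| + 1)) * |y ℓ| ≤ x ℓ / 2 := by
      rw [div_mul_eq_mul_div, div_le_div_iff₀ h2 (by norm_num : (0:ℝ) < 2)]
      nlinarith [abs_nonneg (y ℓ), (hx ℓ hℓ).le]
    calc |t * y ℓ| = |t| * |y ℓ| := abs_mul _ _
      _ ≤ t₀ * |y ℓ| := by nlinarith [abs_nonneg (y ℓ)]
      _ ≤ x ℓ / (2 * (|y ℓ| + 1)) * |y ℓ| := by nlinarith [abs_nonneg (y ℓ)]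
      _ ≤ x ℓ / 2 := h3
  have hfeas : ∀ t : ℝ, |t| ≤ t₀ → ∀ ℓ ∈ s, 0 < x ℓ + t * y ℓ := by
    intro t ht ℓ hℓ
    have h1 := (abs_le.1 (hbound t ht ℓ hℓ)).1
    have h2 := hx ℓ hℓ
    linarith
  set Sy : ℝ := ∑ ℓ ∈ s, y ℓ / x ℓ with hSydef
  set SB : ℝ := ∑ ℓ ∈ s, (y ℓ / x ℓ) ^ 2 with hSBdef
  have hSB : 0 ≤ SB := Finset.sum_nonneg fun ℓ _ => sq_nonneg _
  have hlog : ∀ t : ℝ, |t| ≤ t₀ → ∀ ℓ ∈ s,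
      Real.log (x ℓ) + (t * (y ℓ / x ℓ) - 2 * t ^ 2 * (y ℓ / x ℓ) ^ 2) ≤
        Real.log (x ℓ + t * y ℓ) := by
    intro t ht ℓ hℓ
    have hxp := hx ℓ hℓ
    have hb := hbound t ht ℓ hℓ
    set u : ℝ := t * (y ℓ / x ℓ) with hudef
    have hu : -(1/2 : ℝ) ≤ u := by
      have h1 : |u| ≤ 1/2 := by
        rw [hudef, ← mul_div_assoc, abs_div, abs_of_pos hxp]
        rw [div_le_iff₀ hxp]
        linarith
      linarith [(abs_le.1 h1).1]
    have heq : x ℓ + t * y ℓ = x ℓ * (1 + u) := by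
      rw [hudef]; field_simp
    rw [heq, Real.log_mul (ne_of_gt hxp) (by nlinarith : (1:ℝ) + u ≠ 0)]
    have h2 := log_aux2 hu
    have h3 : t * (y ℓ / x ℓ) - 2 * t ^ 2 * (y ℓ / x ℓ) ^ 2 = u - 2 * u ^ 2 := by
      rw [hudef]; ring
    linarith
  have main : ∀ t : ℝ, |t| ≤ t₀ →
      cN * (t * Sy - 2 * t ^ 2 * SB) ≤ t * A := by
    intro t ht
    have h1 := hJ t (hfeas t ht)
    have h2 : ∑ ℓ ∈ s, (Real.log (x ℓ) + (t * (y ℓ / x ℓ) - 2 * t ^ 2 * (y ℓ / x ℓ) ^ 2)) ≤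
        ∑ ℓ ∈ s, Real.log (x ℓ + t * y ℓ) :=
      Finset.sum_le_sum (hlog t ht)
    have h3 : ∑ ℓ ∈ s, (Real.log (x ℓ) + (t * (y ℓ / x ℓ) - 2 * t ^ 2 * (y ℓ / x ℓ) ^ 2)) =
        (∑ ℓ ∈ s, Real.log (x ℓ)) + (t * Sy - 2 * t ^ 2 * SB) := by
      rw [Finset.sum_add_distrib, hSydef, hSBdef]
      rw [Finset.sum_sub_distrib, Finset.mul_sum, Finset.mul_sum]
    rw [h3] at h2
    have h4 : cN * (t * Sy - 2 * t ^ 2 * SB) ≤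
        cN * ((∑ ℓ ∈ s, Real.log (x ℓ + t * y ℓ)) - ∑ ℓ ∈ s, Real.log (x ℓ)) := by
      apply mul_le_mul_of_nonneg_left _ hcN
      linarith
    linarith
  by_contra hd
  set d : ℝ := A - cN * Sy with hddef
  have hd' : d ≠ 0 := fun h => hd (by rw [hddef] at h; linarith)
  set B : ℝ := cN * SB with hBdef
  have hB : 0 ≤ B := mul_nonneg hcN hSB
  have hd2 : 0 < d ^ 2 := by positivity
  set c : ℝ := min (t₀ / |d|) (1 / (4 * B + 1)) with hcdef
  have hc : 0 < c := lt_min (div_pos ht₀ (abs_pos.2 hd')) (by positivity)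
  have hct : |(-(c * d))| ≤ t₀ := by
    rw [abs_neg, abs_mul, abs_of_pos hc]
    have h1 : c ≤ t₀ / |d| := min_le_left _ _
    rw [← le_div_iff₀ (abs_pos.2 hd')]
    exact h1
  have hc2 : c * (4 * B + 1) ≤ 1 := by
    have h1 : c ≤ 1 / (4 * B + 1) := min_le_right _ _
    rw [le_div_iff₀ (by positivity : (0:ℝ) < 4 * B + 1)] at h1
    exact h1
  have h := main (-(c * d)) hct
  -- cN * ((-(c*d)) * Sy - 2 (c d)^2 SB) ≤ (-(c*d)) * A
  -- i.e. 0 ≤ -(c d) A + cN c d Sy + 2 cN (cd)^2 SB = -c d^2 + 2 B c^2 d^2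
  have hexp : (-(c * d)) * A - cN * ((-(c * d)) * Sy - 2 * (-(c * d)) ^ 2 * SB) =
      -(c * d ^ 2) + 2 * B * c ^ 2 * d ^ 2 := by
    rw [hddef, hBdef]; ring
  nlinarith [mul_pos hc hd2, mul_nonneg (mul_nonneg hB (mul_pos hc hd2).le) hc.le]

lemma variational (n₁ n₂ N₁ N₂ : ℕ) (hN₁ : 0 < N₁) (hN₂ : 0 < N₂)
    (σ : ℤ × ℤ → ℂ) (Ψ : ℕ × ℕ → ℝ) (qhat : ℤ × ℤ → ℂ)
    (hqhat : Feas n₁ n₂ N₁ N₂ Ψ qhat)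
    (hmin : ∀ q, Feas n₁ n₂ N₁ N₂ Ψ q →
      Jdual n₁ n₂ N₁ N₂ σ Ψ qhat ≤ Jdual n₁ n₂ N₁ N₂ σ Ψ q)
    (p : ℤ × ℤ → ℂ) (hp : ConjSym n₁ n₂ p) :
    (∑ k ∈ Lam n₁ n₂, p k * starRingEnd ℂ (σ k)).re =
      (1 / ((N₁ : ℝ) * (N₂ : ℝ))) * ∑ ℓ ∈ gridN N₁ N₂,
        (trigQ n₁ n₂ p (zeta N₁ N₂ ℓ)).re * PhiHat n₁ n₂ N₁ N₂ Ψ qhat ℓ := by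
  have hne : (gridN N₁ N₂).Nonempty :=
    ⟨(0,0), by simp [gridN, Finset.mem_product, hN₁, hN₂]⟩
  have hcN : (0:ℝ) ≤ 1 / ((N₁ : ℝ) * (N₂ : ℝ)) := by positivity
  have hJ : ∀ t : ℝ, (∀ ℓ ∈ gridN N₁ N₂,
      0 < (1 / Ψ ℓ + (trigQ n₁ n₂ qhat (zeta N₁ N₂ ℓ)).re) +
        t * (trigQ n₁ n₂ p (zeta N₁ N₂ ℓ)).re) →
      (1 / ((N₁ : ℝ) * (N₂ : ℝ))) *
        ((∑ ℓ ∈ gridN N₁ N₂, Real.log ((1 / Ψ ℓ + (trigQ n₁ n₂ qhat (zeta N₁ N₂ ℓ)).re) +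
            t * (trigQ n₁ n₂ p (zeta N₁ N₂ ℓ)).re)) -
          ∑ ℓ ∈ gridN N₁ N₂, Real.log (1 / Ψ ℓ + (trigQ n₁ n₂ qhat (zeta N₁ N₂ ℓ)).re)) ≤
        t * (∑ k ∈ Lam n₁ n₂, p k * starRingEnd ℂ (σ k)).re := by
    intro t hpos
    have hfq : Feas n₁ n₂ N₁ N₂ Ψ (fun j => qhat j + (t : ℂ) * p j) := by
      constructor
      · intro k hk
        simp only
        rw [hqhat.1 k hk, hp k hk, map_add, map_mul, Complex.conj_ofReal]
      · intro ℓ hℓ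
        rw [trigQ_add, trigQ_smul]
        simp only [Complex.add_re, Complex.re_ofReal_mul]
        have := hpos ℓ hℓ
        linarith
    have h0 := hmin _ hfq
    unfold Jdual at h0
    have e1 : ∑ k ∈ Lam n₁ n₂, (qhat k + (t : ℂ) * p k) * starRingEnd ℂ (σ k) =
        (∑ k ∈ Lam n₁ n₂, qhat k * starRingEnd ℂ (σ k)) +
          (t : ℂ) * ∑ k ∈ Lam n₁ n₂, p k * starRingEnd ℂ (σ k) := by
      rw [Finset.mul_sum, ← Finset.sum_add_distrib]
      exact Finset.sum_congr rfl fun k _ => by ring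
    rw [e1, Complex.add_re, Complex.re_ofReal_mul] at h0
    have e2 : ∑ ℓ ∈ gridN N₁ N₂,
        Real.log (1 / Ψ ℓ + (trigQ n₁ n₂ (fun j => qhat j + (t : ℂ) * p j) (zeta N₁ N₂ ℓ)).re) =
        ∑ ℓ ∈ gridN N₁ N₂, Real.log ((1 / Ψ ℓ + (trigQ n₁ n₂ qhat (zeta N₁ N₂ ℓ)).re) +
          t * (trigQ n₁ n₂ p (zeta N₁ N₂ ℓ)).re) := by
      refine Finset.sum_congr rfl fun ℓ _ => ?_
      rw [trigQ_add, trigQ_smul]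
      simp only [Complex.add_re, Complex.re_ofReal_mul]
      ring_nf
    rw [e2] at h0
    linarith
  have hkey := key_real (gridN N₁ N₂) hne
    (fun ℓ => 1 / Ψ ℓ + (trigQ n₁ n₂ qhat (zeta N₁ N₂ ℓ)).re)
    (fun ℓ => (trigQ n₁ n₂ p (zeta N₁ N₂ ℓ)).re)
    hqhat.2 (1 / ((N₁ : ℝ) * (N₂ : ℝ))) hcN
    ((∑ k ∈ Lam n₁ n₂, p k * starRingEnd ℂ (σ k)).re) hJ
  rw [hkey]
  congr 1
  refine Finset.sum_congr rfl fun ℓ _ => ?_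
  rw [PhiHat, mul_one_div]

lemma log_aux1 {x y : ℝ} (hx : 0 < x) (hy : 0 < y) :
    Real.log y ≤ Real.log x + (y - x) / x := by
  have h := Real.log_le_sub_one_of_pos (show (0:ℝ) < y / x from div_pos hy hx)
  rw [Real.log_div (ne_of_gt hy) (ne_of_gt hx)] at h
  have h2 : y / x - 1 = (y - x) / x := by field_simp
  linarith [h2 ▸ h]

lemma pairing (n₁ n₂ N₁ N₂ : ℕ) (σ : ℤ × ℤ → ℂ) (Φ : ℕ × ℕ → ℝ)
    (hM : MomentEq n₁ n₂ N₁ N₂ σ Φ) (p : ℤ × ℤ → ℂ) :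
    (∑ k ∈ Lam n₁ n₂, p k * starRingEnd ℂ (σ k)).re =
      (1 / ((N₁ : ℝ) * (N₂ : ℝ))) * ∑ ℓ ∈ gridN N₁ N₂,
        (trigQ n₁ n₂ p (zeta N₁ N₂ ℓ)).re * Φ ℓ := by
  have key : ∑ k ∈ Lam n₁ n₂, p k * starRingEnd ℂ (σ k) =
      ((1 / ((N₁ : ℝ) * (N₂ : ℝ)) : ℝ) : ℂ) * ∑ ℓ ∈ gridN N₁ N₂,
        trigQ n₁ n₂ p (zeta N₁ N₂ ℓ) * ((Φ ℓ : ℝ) : ℂ) := by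
    rw [Finset.mul_sum]
    have step : ∀ k ∈ Lam n₁ n₂, p k * starRingEnd ℂ (σ k) =
        ∑ ℓ ∈ gridN N₁ N₂, ((1 / ((N₁ : ℝ) * (N₂ : ℝ)) : ℝ) : ℂ) *
          (p k * Complex.exp (-Complex.I *
            (((k.1 : ℝ) * (zeta N₁ N₂ ℓ).1 + (k.2 : ℝ) * (zeta N₁ N₂ ℓ).2 : ℝ) : ℂ)) *
            ((Φ ℓ : ℝ) : ℂ)) := by
      intro k hk
      rw [hM k hk]
      simp only [map_mul, map_sum, ← Complex.exp_conj, Complex.conj_I,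
        Complex.conj_ofReal, Finset.mul_sum]
      refine Finset.sum_congr rfl fun ℓ _ => ?_
      ring
    rw [Finset.sum_congr rfl step, Finset.sum_comm]
    refine Finset.sum_congr rfl fun ℓ _ => ?_
    rw [trigQ, Finset.sum_mul, Finset.mul_sum]
  rw [key]
  rw [Complex.re_ofReal_mul]
  congr 1
  rw [Complex.re_sum]
  refine Finset.sum_congr rfl fun ℓ _ => ?_
  rw [Complex.mul_re, Complex.ofReal_re, Complex.ofReal_im]
  ring

theorem stmt11 (n₁ n₂ N₁ N₂ : ℕ) (hn₁ : 0 < n₁) (hn₂ : 0 < n₂)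
    (hN₁ : 0 < N₁) (hN₂ : 0 < N₂)
    (σ : ℤ × ℤ → ℂ) (hσ : ConjSym n₁ n₂ σ)
    (Ψ : ℕ × ℕ → ℝ) (hΨ : ∀ ℓ ∈ gridN N₁ N₂, 0 < Ψ ℓ)
    (qhat : ℤ × ℤ → ℂ) (hqhat : Feas n₁ n₂ N₁ N₂ Ψ qhat) :
    (∀ q : ℤ × ℤ → ℂ, Feas n₁ n₂ N₁ N₂ Ψ q →
        Jdual n₁ n₂ N₁ N₂ σ Ψ qhat ≤ Jdual n₁ n₂ N₁ N₂ σ Ψ q) ↔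
      MomentEq n₁ n₂ N₁ N₂ σ (PhiHat n₁ n₂ N₁ N₂ Ψ qhat) := by
  set Φ : ℕ × ℕ → ℝ := PhiHat n₁ n₂ N₁ N₂ Ψ qhat with hΦdef
  have hcN : (0:ℝ) ≤ 1 / ((N₁ : ℝ) * (N₂ : ℝ)) := by positivity
  constructor
  · -- minimizer → moment equations
    intro hmin k hk
    set Tk : ℂ := ((1 / ((N₁ : ℝ) * (N₂ : ℝ)) : ℝ) : ℂ) * ∑ ℓ ∈ gridN N₁ N₂,
      Complex.exp (Complex.I *
        (((k.1 : ℝ) * (zeta N₁ N₂ ℓ).1 + (k.2 : ℝ) * (zeta N₁ N₂ ℓ).2 : ℝ) : ℂ)) *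
        ((Φ ℓ : ℝ) : ℂ) with hTkdef
    show σ k = Tk
    have hconjTk : starRingEnd ℂ Tk = ((1 / ((N₁ : ℝ) * (N₂ : ℝ)) : ℝ) : ℂ) *
        ∑ ℓ ∈ gridN N₁ N₂, Complex.exp (-Complex.I *
          (((k.1 : ℝ) * (zeta N₁ N₂ ℓ).1 + (k.2 : ℝ) * (zeta N₁ N₂ ℓ).2 : ℝ) : ℂ)) *
          ((Φ ℓ : ℝ) : ℂ) := by
      rw [hTkdef]
      simp only [map_mul, map_sum, ← Complex.exp_conj, Complex.conj_I,
        Complex.conj_ofReal, neg_mul]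
    have hmain : ∀ c : ℂ, (c * starRingEnd ℂ (σ k)).re = (c * starRingEnd ℂ Tk).re := by
      intro c
      set pc : ℤ × ℤ → ℂ := fun j =>
        (if j = k then c else 0) + (if j = -k then starRingEnd ℂ c else 0) with hpcdef
      have hpc : ConjSym n₁ n₂ pc := by
        intro j _
        simp only [hpcdef, map_add, apply_ite (starRingEnd ℂ), map_zero,
          Complex.conj_conj, neg_inj, neg_eq_iff_eq_neg, neg_neg]
        exact add_comm _ _
      have hvar := variational n₁ n₂ N₁ N₂ hN₁ hN₂ σ Ψ qhat hqhat hmin pc hpc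
      -- compute left side
      have hL : (∑ j ∈ Lam n₁ n₂, pc j * starRingEnd ℂ (σ j)).re =
          2 * (c * starRingEnd ℂ (σ k)).re := by
        have e : ∑ j ∈ Lam n₁ n₂, pc j * starRingEnd ℂ (σ j) =
            c * starRingEnd ℂ (σ k) + starRingEnd ℂ c * starRingEnd ℂ (σ (-k)) := by
          simp only [hpcdef, add_mul, ite_mul, zero_mul, Finset.sum_add_distrib,
            Finset.sum_ite_eq', hk, neg_mem_Lam hk, if_pos]
        rw [e, hσ k hk, Complex.conj_conj]
        have : starRingEnd ℂ c * σ k = starRingEnd ℂ (c * starRingEnd ℂ (σ k)) := by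
          rw [map_mul, Complex.conj_conj]
        rw [this, Complex.add_re, Complex.conj_re]
        ring
      -- compute trigQ of pc
      have hT : ∀ ℓ ∈ gridN N₁ N₂, (trigQ n₁ n₂ pc (zeta N₁ N₂ ℓ)).re =
          2 * (c * Complex.exp (-Complex.I *
            (((k.1 : ℝ) * (zeta N₁ N₂ ℓ).1 + (k.2 : ℝ) * (zeta N₁ N₂ ℓ).2 : ℝ) : ℂ))).re := by
        intro ℓ _
        set θ := zeta N₁ N₂ ℓ
        set E : ℂ := Complex.exp (-Complex.I *
          (((k.1 : ℝ) * θ.1 + (k.2 : ℝ) * θ.2 : ℝ) : ℂ)) with hEdef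
        have hEneg : Complex.exp (-Complex.I *
            ((((-k).1 : ℝ) * θ.1 + ((-k).2 : ℝ) * θ.2 : ℝ) : ℂ)) = starRingEnd ℂ E := by
          rw [hEdef, ← Complex.exp_conj]
          congr 1
          simp only [map_mul, map_neg, Complex.conj_I, Complex.conj_ofReal,
            Prod.fst_neg, Prod.snd_neg, Int.cast_neg]
          push_cast
          ring
        have e : trigQ n₁ n₂ pc θ = c * E + starRingEnd ℂ c * starRingEnd ℂ E := by
          rw [trigQ]
          simp only [hpcdef, add_mul, ite_mul, zero_mul, Finset.sum_add_distrib,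
            Finset.sum_ite_eq', hk, neg_mem_Lam hk, if_pos, hEdef]
          rw [← hEneg]
        rw [e, ← map_mul, Complex.add_re, Complex.conj_re]
        ring
      -- compute right side of hvar
      have hR : (1 / ((N₁ : ℝ) * (N₂ : ℝ))) * ∑ ℓ ∈ gridN N₁ N₂,
          (trigQ n₁ n₂ pc (zeta N₁ N₂ ℓ)).re * Φ ℓ = 2 * (c * starRingEnd ℂ Tk).re := by
        have e1 : c * starRingEnd ℂ Tk = ((1 / ((N₁ : ℝ) * (N₂ : ℝ)) : ℝ) : ℂ) *
            ∑ ℓ ∈ gridN N₁ N₂, (c * Complex.exp (-Complex.I *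
              (((k.1 : ℝ) * (zeta N₁ N₂ ℓ).1 + (k.2 : ℝ) * (zeta N₁ N₂ ℓ).2 : ℝ) : ℂ))) *
              ((Φ ℓ : ℝ) : ℂ) := by
          rw [hconjTk]
          simp only [Finset.mul_sum]
          exact Finset.sum_congr rfl fun ℓ _ => by ring
        have e2 : ∀ ℓ ∈ gridN N₁ N₂, (trigQ n₁ n₂ pc (zeta N₁ N₂ ℓ)).re * Φ ℓ =
            2 * ((c * Complex.exp (-Complex.I *
              (((k.1 : ℝ) * (zeta N₁ N₂ ℓ).1 + (k.2 : ℝ) * (zeta N₁ N₂ ℓ).2 : ℝ) : ℂ))) *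
              ((Φ ℓ : ℝ) : ℂ)).re := by
          intro ℓ hℓ
          rw [hT ℓ hℓ, Complex.re_mul_ofReal]
          ring
        rw [Finset.sum_congr rfl e2, ← Finset.mul_sum, e1, Complex.re_ofReal_mul,
          Complex.re_sum]
        ring
      rw [hL, hR] at hvar
      linarith
    have h2 := hmain (σ k - Tk)
    have h3 : ((σ k - Tk) * starRingEnd ℂ (σ k - Tk)).re = 0 := by
      rw [map_sub, mul_sub]
      simp only [Complex.sub_re]
      linarith
    rw [Complex.mul_conj] at h3
    rw [Complex.ofReal_re] at h3
    exact sub_eq_zero.1 (Complex.normSq_eq_zero.1 h3)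
  · -- moment equations → minimizer
    intro hM q hq
    set p : ℤ × ℤ → ℂ := fun j => q j - qhat j with hpdef
    have hqe : q = fun j => qhat j + p j := funext fun j => by rw [hpdef]; ring
    have hL := pairing n₁ n₂ N₁ N₂ σ Φ hM p
    unfold Jdual
    have e1 : (∑ k ∈ Lam n₁ n₂, q k * starRingEnd ℂ (σ k)).re =
        (∑ k ∈ Lam n₁ n₂, qhat k * starRingEnd ℂ (σ k)).re +
          (∑ k ∈ Lam n₁ n₂, p k * starRingEnd ℂ (σ k)).re := by
      have es : ∑ k ∈ Lam n₁ n₂, q k * starRingEnd ℂ (σ k) =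
          ∑ k ∈ Lam n₁ n₂, (qhat k * starRingEnd ℂ (σ k) + p k * starRingEnd ℂ (σ k)) :=
        Finset.sum_congr rfl fun k _ => by rw [hpdef]; ring
      rw [es, Finset.sum_add_distrib, Complex.add_re]
    have e2 : ∀ ℓ ∈ gridN N₁ N₂,
        Real.log (1 / Ψ ℓ + (trigQ n₁ n₂ q (zeta N₁ N₂ ℓ)).re) ≤
          Real.log (1 / Ψ ℓ + (trigQ n₁ n₂ qhat (zeta N₁ N₂ ℓ)).re) +
            (trigQ n₁ n₂ p (zeta N₁ N₂ ℓ)).re * Φ ℓ := by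
      intro ℓ hℓ
      have hxq := hq.2 ℓ hℓ
      have hxh := hqhat.2 ℓ hℓ
      have key := log_aux1 hxh hxq
      have hy : (1 / Ψ ℓ + (trigQ n₁ n₂ q (zeta N₁ N₂ ℓ)).re) -
          (1 / Ψ ℓ + (trigQ n₁ n₂ qhat (zeta N₁ N₂ ℓ)).re) =
          (trigQ n₁ n₂ p (zeta N₁ N₂ ℓ)).re := by
        rw [hqe, trigQ_add, Complex.add_re]
        ring
      rw [hy] at key
      rw [hΦdef, PhiHat, mul_one_div] at *
      linarith [key]
    have e3 : ∑ ℓ ∈ gridN N₁ N₂, Real.log (1 / Ψ ℓ + (trigQ n₁ n₂ q (zeta N₁ N₂ ℓ)).re) ≤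
        (∑ ℓ ∈ gridN N₁ N₂, Real.log (1 / Ψ ℓ + (trigQ n₁ n₂ qhat (zeta N₁ N₂ ℓ)).re)) +
          ∑ ℓ ∈ gridN N₁ N₂, (trigQ n₁ n₂ p (zeta N₁ N₂ ℓ)).re * Φ ℓ := by
      rw [← Finset.sum_add_distrib]
      exact Finset.sum_le_sum e2
    have e4 := mul_le_mul_of_nonneg_left e3 hcN
    rw [mul_add] at e4
    rw [e1]
    linarith

end
end

section
/- Let σ : Λ → ℂ be conjugate-symmetric and Ψ : Z_N² → ℝ strictly positive. Suppose q̂ ∈ ℒ₊ is such that Φ̂(ℓ) = 1/(1/Ψ(ℓ) + Q̂(ζ_ℓ)) satisfies the moment equations for σ. Then Φ̂ is the unique minimizer of the primal problem: for every strictly positive Φ : Z_N² → ℝ satisfying the moment equations for σ, one has D_N(Φ,Ψ) ≥ D_N(Φ̂,Ψ), with equality if and only if Φ = Φ̂. -/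
open Complex BigOperators

noncomputable section

/-- The discrete Itakura–Saito pseudodistance between `Φ` and `Ψ` on the grid. -/
def DIS (N₁ N₂ : ℕ) (Φ Ψ : ℕ × ℕ → ℝ) : ℝ :=
  (1 / ((N₁ : ℝ) * (N₂ : ℝ))) *
    ∑ ℓ ∈ gridN N₁ N₂, (Real.log (Ψ ℓ / Φ ℓ) + (Φ ℓ - Ψ ℓ) / Ψ ℓ)

theorem stmt12 (n₁ n₂ N₁ N₂ : ℕ) (hn₁ : 0 < n₁) (hn₂ : 0 < n₂)
    (hN₁ : 0 < N₁) (hN₂ : 0 < N₂)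
    (σ : ℤ × ℤ → ℂ) (hσ : ConjSym n₁ n₂ σ)
    (Ψ : ℕ × ℕ → ℝ) (hΨ : ∀ ℓ ∈ gridN N₁ N₂, 0 < Ψ ℓ)
    (qhat : ℤ × ℤ → ℂ) (hqhat : Feas n₁ n₂ N₁ N₂ Ψ qhat)
    (hmom : MomentEq n₁ n₂ N₁ N₂ σ (PhiHat n₁ n₂ N₁ N₂ Ψ qhat)) :
    ∀ Φ : ℕ × ℕ → ℝ, (∀ ℓ ∈ gridN N₁ N₂, 0 < Φ ℓ) →
      MomentEq n₁ n₂ N₁ N₂ σ Φ →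
      DIS N₁ N₂ (PhiHat n₁ n₂ N₁ N₂ Ψ qhat) Ψ ≤ DIS N₁ N₂ Φ Ψ ∧
        (DIS N₁ N₂ Φ Ψ = DIS N₁ N₂ (PhiHat n₁ n₂ N₁ N₂ Ψ qhat) Ψ ↔
          ∀ ℓ ∈ gridN N₁ N₂, Φ ℓ = PhiHat n₁ n₂ N₁ N₂ Ψ qhat ℓ) := by
  intro Φ hΦ hmomΦ
  set Φh : ℕ × ℕ → ℝ := PhiHat n₁ n₂ N₁ N₂ Ψ qhat with hΦh_def
  have hNinv : (0:ℝ) < 1 / ((N₁:ℝ) * (N₂:ℝ)) := by positivity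
  have hc : ((1 / ((N₁ : ℝ) * (N₂ : ℝ)) : ℝ) : ℂ) ≠ 0 := by exact_mod_cast hNinv.ne'
  -- the sums with exponentials agree for Φ and Φh
  have hsum : ∀ k ∈ Lam n₁ n₂,
      (∑ ℓ ∈ gridN N₁ N₂, Complex.exp (Complex.I *
        (((k.1 : ℝ) * (zeta N₁ N₂ ℓ).1 + (k.2 : ℝ) * (zeta N₁ N₂ ℓ).2 : ℝ) : ℂ)) *
        ((Φ ℓ : ℝ) : ℂ))
      = ∑ ℓ ∈ gridN N₁ N₂, Complex.exp (Complex.I *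
        (((k.1 : ℝ) * (zeta N₁ N₂ ℓ).1 + (k.2 : ℝ) * (zeta N₁ N₂ ℓ).2 : ℝ) : ℂ)) *
        ((Φh ℓ : ℝ) : ℂ) := by
    intro k hk
    exact mul_left_cancel₀ hc ((hmomΦ k hk).symm.trans (hmom k hk))
  -- orthogonality (complex form)
  have hC : ∑ ℓ ∈ gridN N₁ N₂,
      trigQ n₁ n₂ qhat (zeta N₁ N₂ ℓ) * (((Φ ℓ - Φh ℓ : ℝ)) : ℂ) = 0 := by
    unfold trigQ
    simp_rw [Finset.sum_mul]
    rw [Finset.sum_comm]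
    apply Finset.sum_eq_zero
    intro k hk
    have hk' : -k ∈ Lam n₁ n₂ := by
      simp only [Lam, Finset.mem_product, Finset.mem_Icc, Prod.fst_neg, Prod.snd_neg] at hk ⊢
      omega
    have h := hsum (-k) hk'
    have hre : ∀ ℓ : ℕ × ℕ, Complex.exp (Complex.I *
        ((((-k).1 : ℝ) * (zeta N₁ N₂ ℓ).1 + ((-k).2 : ℝ) * (zeta N₁ N₂ ℓ).2 : ℝ) : ℂ))
        = Complex.exp (-Complex.I *
        (((k.1 : ℝ) * (zeta N₁ N₂ ℓ).1 + (k.2 : ℝ) * (zeta N₁ N₂ ℓ).2 : ℝ) : ℂ)) := by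
      intro ℓ; congr 1; simp only [Prod.fst_neg, Prod.snd_neg]; push_cast; ring
    simp_rw [hre] at h
    have hcast : ∀ ℓ : ℕ × ℕ, ((Φ ℓ - Φh ℓ : ℝ) : ℂ) = ((Φ ℓ : ℝ) : ℂ) - ((Φh ℓ : ℝ) : ℂ) := by
      intro ℓ; push_cast; ring
    simp_rw [hcast, mul_sub]
    rw [Finset.sum_sub_distrib]
    simp_rw [mul_assoc]
    rw [← Finset.mul_sum, ← Finset.mul_sum, h, sub_self]
  -- orthogonality (real form)
  have hQ0 : ∑ ℓ ∈ gridN N₁ N₂,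
      (trigQ n₁ n₂ qhat (zeta N₁ N₂ ℓ)).re * (Φ ℓ - Φh ℓ) = 0 := by
    have h := congrArg Complex.re hC
    rw [Complex.re_sum] at h
    simpa [Complex.mul_re] using h
  set Qre : ℕ × ℕ → ℝ := fun ℓ => (trigQ n₁ n₂ qhat (zeta N₁ N₂ ℓ)).re with hQre_def
  set p : ℕ × ℕ → ℝ := fun ℓ => 1 / Ψ ℓ + Qre ℓ with hp_def
  have hppos : ∀ ℓ ∈ gridN N₁ N₂, 0 < p ℓ := fun ℓ hℓ => hqhat.2 ℓ hℓ
  have hΦhp : ∀ ℓ : ℕ × ℕ, Φh ℓ = 1 / p ℓ := fun ℓ => rfl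
  set g : ℕ × ℕ → ℝ := fun ℓ => Φ ℓ * p ℓ - 1 - Real.log (Φ ℓ * p ℓ) with hg_def
  -- pointwise identity
  have hpt : ∀ ℓ ∈ gridN N₁ N₂,
      (Real.log (Ψ ℓ / Φ ℓ) + (Φ ℓ - Ψ ℓ) / Ψ ℓ)
        - (Real.log (Ψ ℓ / Φh ℓ) + (Φh ℓ - Ψ ℓ) / Ψ ℓ)
      = g ℓ - Qre ℓ * (Φ ℓ - Φh ℓ) := by
    intro ℓ hℓ
    have hΨℓ := hΨ ℓ hℓ
    have hΦℓ := hΦ ℓ hℓ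
    have hpℓ := hppos ℓ hℓ
    have hΨQ : 1 / Ψ ℓ = p ℓ - Qre ℓ := by rw [hp_def]; ring
    rw [hΦhp ℓ, Real.log_div hΨℓ.ne' hΦℓ.ne', Real.log_div hΨℓ.ne' (by positivity),
      hg_def]
    simp only
    rw [Real.log_mul hΦℓ.ne' hpℓ.ne', one_div (p ℓ), Real.log_inv]
    have h1 : (Φ ℓ - Ψ ℓ) / Ψ ℓ = Φ ℓ * (p ℓ - Qre ℓ) - 1 := by
      rw [sub_div, div_self hΨℓ.ne', ← hΨQ]; field_simp
    have h2 : ((p ℓ)⁻¹ - Ψ ℓ) / Ψ ℓ = (p ℓ)⁻¹ * (p ℓ - Qre ℓ) - 1 := by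
      rw [sub_div, div_self hΨℓ.ne', ← hΨQ]; field_simp
    rw [h1, h2]
    field_simp
    ring
  have hdiff : DIS N₁ N₂ Φ Ψ - DIS N₁ N₂ Φh Ψ
      = (1 / ((N₁:ℝ) * (N₂:ℝ))) * ∑ ℓ ∈ gridN N₁ N₂, g ℓ := by
    unfold DIS
    rw [← mul_sub, ← Finset.sum_sub_distrib, Finset.sum_congr rfl hpt,
      Finset.sum_sub_distrib]
    simp only [hQre_def]
    rw [hQ0, sub_zero]
  have hg0 : ∀ ℓ ∈ gridN N₁ N₂, 0 ≤ g ℓ := by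
    intro ℓ hℓ
    have hx : 0 < Φ ℓ * p ℓ := mul_pos (hΦ ℓ hℓ) (hppos ℓ hℓ)
    have := Real.log_le_sub_one_of_pos hx
    rw [hg_def]; simp only; linarith
  have hsumg : 0 ≤ ∑ ℓ ∈ gridN N₁ N₂, g ℓ := Finset.sum_nonneg hg0
  have hmulnn : 0 ≤ (1 / ((N₁:ℝ) * (N₂:ℝ))) * ∑ ℓ ∈ gridN N₁ N₂, g ℓ :=
    mul_nonneg hNinv.le hsumg
  refine ⟨?_, ?_, ?_⟩
  · linarith
  · intro heq ℓ hℓ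
    have hS : ∑ ℓ ∈ gridN N₁ N₂, g ℓ = 0 := by
      have h0 : (1 / ((N₁:ℝ) * (N₂:ℝ))) * ∑ ℓ ∈ gridN N₁ N₂, g ℓ = 0 := by
        rw [← hdiff, heq]; ring
      exact (mul_eq_zero.mp h0).resolve_left hNinv.ne'
    have hg := (Finset.sum_eq_zero_iff_of_nonneg hg0).mp hS ℓ hℓ
    have hpℓ := hppos ℓ hℓ
    have hx : 0 < Φ ℓ * p ℓ := mul_pos (hΦ ℓ hℓ) hpℓ
    have h1 : Φ ℓ * p ℓ = 1 := by
      by_contra hne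
      have := Real.log_lt_sub_one_of_pos hx hne
      rw [hg_def] at hg; simp only at hg; linarith
    rw [hΦhp ℓ]
    field_simp
    linarith [h1]
  · intro h
    have hgz : ∀ ℓ ∈ gridN N₁ N₂, g ℓ = 0 := by
      intro ℓ hℓ
      have hpℓ := hppos ℓ hℓ
      have h1 : Φ ℓ * p ℓ = 1 := by
        rw [h ℓ hℓ, hΦhp ℓ]; field_simp
      rw [hg_def]; simp only [h1, Real.log_one]; ring
    have : ∑ ℓ ∈ gridN N₁ N₂, g ℓ = 0 := Finset.sum_eq_zero hgz
    have := hdiff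
    rw [‹∑ ℓ ∈ gridN N₁ N₂, g ℓ = 0›] at this
    linarith [this]

end
end

section
/- Let σ : Λ → ℂ be conjugate-symmetric and Ψ : Z_N² → ℝ strictly positive, and suppose the grid is fine enough that the only conjugate-symmetric q : Λ → ℂ with Q(ζ_ℓ) = 0 for all ℓ ∈ Z_N² is q = 0. Then there is at most one q̂ ∈ ℒ₊ such that Φ̂(ℓ) = 1/(1/Ψ(ℓ) + Q̂(ζ_ℓ)) satisfies the moment equations for σ. -/
open Complex BigOperators

noncomputable section

lemma trigQ_real (n₁ n₂ : ℕ) (q : ℤ × ℤ → ℂ) (hq : ConjSym n₁ n₂ q) (θ : ℝ × ℝ) :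
    (trigQ n₁ n₂ q θ).im = 0 := by
  have h : starRingEnd ℂ (trigQ n₁ n₂ q θ) = trigQ n₁ n₂ q θ := by
    rw [trigQ, map_sum]
    refine Finset.sum_nbij' (fun k => -k) (fun k => -k) ?_ ?_ (by simp) (by simp) ?_
    · exact fun k hk => neg_mem_Lam hk
    · exact fun k hk => neg_mem_Lam hk
    · intro k hk
      rw [map_mul, ← hq k hk, ← Complex.exp_conj]
      congr 2
      have : ((((-k).1 : ℝ) * θ.1 + ((-k).2 : ℝ) * θ.2 : ℝ) : ℂ)
          = -((((k.1 : ℝ) * θ.1 + (k.2 : ℝ) * θ.2 : ℝ) : ℂ)) := by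
        simp only [Prod.fst_neg, Prod.snd_neg]; push_cast; ring
      rw [this, map_mul, map_neg, Complex.conj_I]
      rw [Complex.conj_ofReal]
      ring
  have := congrArg Complex.im h
  simp only [Complex.conj_im] at this
  linarith

theorem stmt13 (n₁ n₂ N₁ N₂ : ℕ) (hn₁ : 0 < n₁) (hn₂ : 0 < n₂)
    (hN₁ : 0 < N₁) (hN₂ : 0 < N₂)
    (σ : ℤ × ℤ → ℂ) (hσ : ConjSym n₁ n₂ σ)
    (Ψ : ℕ × ℕ → ℝ) (hΨ : ∀ ℓ ∈ gridN N₁ N₂, 0 < Ψ ℓ)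
    -- the grid is fine enough: a conjugate-symmetric trigonometric polynomial
    -- vanishing on the whole grid has zero coefficients
    (hfine : ∀ q : ℤ × ℤ → ℂ, ConjSym n₁ n₂ q →
      (∀ ℓ ∈ gridN N₁ N₂, trigQ n₁ n₂ q (zeta N₁ N₂ ℓ) = 0) →
      ∀ k ∈ Lam n₁ n₂, q k = 0)
    (qhat₁ qhat₂ : ℤ × ℤ → ℂ)
    (hqhat₁ : Feas n₁ n₂ N₁ N₂ Ψ qhat₁) (hqhat₂ : Feas n₁ n₂ N₁ N₂ Ψ qhat₂)
    (hmom₁ : MomentEq n₁ n₂ N₁ N₂ σ (PhiHat n₁ n₂ N₁ N₂ Ψ qhat₁))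
    (hmom₂ : MomentEq n₁ n₂ N₁ N₂ σ (PhiHat n₁ n₂ N₁ N₂ Ψ qhat₂)) :
    ∀ k ∈ Lam n₁ n₂, qhat₁ k = qhat₂ k := by
  -- setup
  obtain ⟨hcs₁, hpos₁⟩ := hqhat₁
  obtain ⟨hcs₂, hpos₂⟩ := hqhat₂
  set q : ℤ × ℤ → ℂ := fun k => qhat₁ k - qhat₂ k with hqdef
  have hcs : ConjSym n₁ n₂ q := by
    intro k hk
    simp only [hqdef, hcs₁ k hk, hcs₂ k hk, map_sub]
  set Φ₁ := PhiHat n₁ n₂ N₁ N₂ Ψ qhat₁ with hΦ₁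
  set Φ₂ := PhiHat n₁ n₂ N₁ N₂ Ψ qhat₂ with hΦ₂
  have hc : ((1 / ((N₁ : ℝ) * (N₂ : ℝ)) : ℝ) : ℂ) ≠ 0 := by
    have : (0:ℝ) < (N₁ : ℝ) * (N₂ : ℝ) := by positivity
    simp only [ne_eq, Complex.ofReal_eq_zero]
    positivity
  -- moment difference
  have hmom : ∀ k ∈ Lam n₁ n₂,
      ∑ ℓ ∈ gridN N₁ N₂,
        Complex.exp (Complex.I *
          (((k.1 : ℝ) * (zeta N₁ N₂ ℓ).1 + (k.2 : ℝ) * (zeta N₁ N₂ ℓ).2 : ℝ) : ℂ)) *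
          (((Φ₁ ℓ - Φ₂ ℓ : ℝ)) : ℂ) = 0 := by
    intro k hk
    have h1 := hmom₁ k hk
    have h2 := hmom₂ k hk
    have h3 : ((1 / ((N₁ : ℝ) * (N₂ : ℝ)) : ℝ) : ℂ) * ∑ ℓ ∈ gridN N₁ N₂,
        Complex.exp (Complex.I *
          (((k.1 : ℝ) * (zeta N₁ N₂ ℓ).1 + (k.2 : ℝ) * (zeta N₁ N₂ ℓ).2 : ℝ) : ℂ)) *
          (((Φ₁ ℓ - Φ₂ ℓ : ℝ)) : ℂ) = 0 := by
      rw [Finset.mul_sum]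
      have : ∀ ℓ ∈ gridN N₁ N₂,
          ((1 / ((N₁ : ℝ) * (N₂ : ℝ)) : ℝ) : ℂ) *
          (Complex.exp (Complex.I *
            (((k.1 : ℝ) * (zeta N₁ N₂ ℓ).1 + (k.2 : ℝ) * (zeta N₁ N₂ ℓ).2 : ℝ) : ℂ)) *
            (((Φ₁ ℓ - Φ₂ ℓ : ℝ)) : ℂ))
          = ((1 / ((N₁ : ℝ) * (N₂ : ℝ)) : ℝ) : ℂ) *
            (Complex.exp (Complex.I *
              (((k.1 : ℝ) * (zeta N₁ N₂ ℓ).1 + (k.2 : ℝ) * (zeta N₁ N₂ ℓ).2 : ℝ) : ℂ)) *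
              ((Φ₁ ℓ : ℝ) : ℂ))
          - ((1 / ((N₁ : ℝ) * (N₂ : ℝ)) : ℝ) : ℂ) *
            (Complex.exp (Complex.I *
              (((k.1 : ℝ) * (zeta N₁ N₂ ℓ).1 + (k.2 : ℝ) * (zeta N₁ N₂ ℓ).2 : ℝ) : ℂ)) *
              ((Φ₂ ℓ : ℝ) : ℂ)) := by
        intro ℓ _
        push_cast
        ring
      rw [Finset.sum_congr rfl this, Finset.sum_sub_distrib, ← Finset.mul_sum, ← Finset.mul_sum]
      rw [← h1, ← h2]
      ring
    exact (mul_eq_zero.mp h3).resolve_left hc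
  -- key sum S = 0
  have hS : ∑ ℓ ∈ gridN N₁ N₂,
      trigQ n₁ n₂ q (zeta N₁ N₂ ℓ) * (((Φ₁ ℓ - Φ₂ ℓ : ℝ)) : ℂ) = 0 := by
    have : ∑ ℓ ∈ gridN N₁ N₂,
        trigQ n₁ n₂ q (zeta N₁ N₂ ℓ) * (((Φ₁ ℓ - Φ₂ ℓ : ℝ)) : ℂ)
        = ∑ k ∈ Lam n₁ n₂, q k * ∑ ℓ ∈ gridN N₁ N₂,
          Complex.exp (Complex.I *
            ((((-k).1 : ℝ) * (zeta N₁ N₂ ℓ).1 + ((-k).2 : ℝ) * (zeta N₁ N₂ ℓ).2 : ℝ) : ℂ)) *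
          (((Φ₁ ℓ - Φ₂ ℓ : ℝ)) : ℂ) := by
      simp only [trigQ, Finset.sum_mul, Finset.mul_sum]
      rw [Finset.sum_comm]
      refine Finset.sum_congr rfl fun k _ => Finset.sum_congr rfl fun ℓ _ => ?_
      have : Complex.I * ((((-k).1 : ℝ) * (zeta N₁ N₂ ℓ).1 + ((-k).2 : ℝ) * (zeta N₁ N₂ ℓ).2 : ℝ) : ℂ)
          = -Complex.I * (((k.1 : ℝ) * (zeta N₁ N₂ ℓ).1 + (k.2 : ℝ) * (zeta N₁ N₂ ℓ).2 : ℝ) : ℂ) := by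
        simp only [Prod.fst_neg, Prod.snd_neg]; push_cast; ring
      rw [this]; ring
    rw [this]
    refine Finset.sum_eq_zero fun k hk => ?_
    rw [hmom (-k) (neg_mem_Lam hk), mul_zero]
  -- real part of S
  have hSre : ∑ ℓ ∈ gridN N₁ N₂,
      (trigQ n₁ n₂ q (zeta N₁ N₂ ℓ)).re * (Φ₁ ℓ - Φ₂ ℓ) = 0 := by
    have := congrArg Complex.re hS
    rw [Complex.re_sum, Complex.zero_re] at this
    rw [← this]
    refine Finset.sum_congr rfl fun ℓ _ => ?_
    rw [Complex.mul_re, Complex.ofReal_re, Complex.ofReal_im, mul_zero, sub_zero]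
  -- pointwise: b₁ = b₂
  have hb : ∀ ℓ ∈ gridN N₁ N₂,
      (trigQ n₁ n₂ qhat₁ (zeta N₁ N₂ ℓ)).re = (trigQ n₁ n₂ qhat₂ (zeta N₁ N₂ ℓ)).re := by
    have hterm : ∀ ℓ ∈ gridN N₁ N₂,
        (trigQ n₁ n₂ q (zeta N₁ N₂ ℓ)).re * (Φ₁ ℓ - Φ₂ ℓ) ≤ 0 := by
      intro ℓ hℓ
      have hb₁ := hpos₁ ℓ hℓ
      have hb₂ := hpos₂ ℓ hℓ
      set b₁ := 1 / Ψ ℓ + (trigQ n₁ n₂ qhat₁ (zeta N₁ N₂ ℓ)).re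
      set b₂ := 1 / Ψ ℓ + (trigQ n₁ n₂ qhat₂ (zeta N₁ N₂ ℓ)).re
      have hre : (trigQ n₁ n₂ q (zeta N₁ N₂ ℓ)).re = b₁ - b₂ := by
        rw [hqdef, trigQ_sub, Complex.sub_re]; simp [b₁, b₂]
      have hΦ : Φ₁ ℓ - Φ₂ ℓ = 1 / b₁ - 1 / b₂ := rfl
      rw [hre, hΦ]
      have : (b₁ - b₂) * (1 / b₁ - 1 / b₂) = -((b₁ - b₂)^2 / (b₁ * b₂)) := by
        field_simp; ring
      rw [this]
      have : 0 ≤ (b₁ - b₂)^2 / (b₁ * b₂) := by positivity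
      linarith
    intro ℓ hℓ
    have heach := (Finset.sum_eq_zero_iff_of_nonpos hterm).mp hSre ℓ hℓ
    have hb₁ := hpos₁ ℓ hℓ
    have hb₂ := hpos₂ ℓ hℓ
    set b₁ := 1 / Ψ ℓ + (trigQ n₁ n₂ qhat₁ (zeta N₁ N₂ ℓ)).re
    set b₂ := 1 / Ψ ℓ + (trigQ n₁ n₂ qhat₂ (zeta N₁ N₂ ℓ)).re
    have hre : (trigQ n₁ n₂ q (zeta N₁ N₂ ℓ)).re = b₁ - b₂ := by
      rw [hqdef, trigQ_sub, Complex.sub_re]; simp [b₁, b₂]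
    have hΦ : Φ₁ ℓ - Φ₂ ℓ = 1 / b₁ - 1 / b₂ := rfl
    rw [hre, hΦ] at heach
    have key : -((b₁ - b₂)^2 / (b₁ * b₂)) = 0 := by
      rw [← heach]; field_simp; ring
    have hs : (b₁ - b₂)^2 / (b₁ * b₂) = 0 := by linarith
    have : (b₁ - b₂)^2 = 0 := by
      rcases div_eq_zero_iff.mp hs with h | h
      · exact h
      · exact absurd h (by positivity)
    have : b₁ = b₂ := by nlinarith [sq_nonneg (b₁ - b₂)]
    simp only [b₁, b₂] at this
    linarith
  -- conclude with hfine
  have hzero : ∀ ℓ ∈ gridN N₁ N₂, trigQ n₁ n₂ q (zeta N₁ N₂ ℓ) = 0 := by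
    intro ℓ hℓ
    have him := trigQ_real n₁ n₂ q hcs (zeta N₁ N₂ ℓ)
    have hre : (trigQ n₁ n₂ q (zeta N₁ N₂ ℓ)).re = 0 := by
      rw [hqdef, trigQ_sub, Complex.sub_re, hb ℓ hℓ, sub_self]
    exact Complex.ext hre him
  intro k hk
  have := hfine q hcs hzero k hk
  simpa [hqdef, sub_eq_zero] using this


end
end

section
/- Let Ψ : Z_N² → ℝ be strictly positive and suppose the covariance data σ : Λ → ℂ is generated by a strictly positive spectrum, i.e. there exists Φ₀ : Z_N² → ℝ with Φ₀ > 0 such that σ_k = (1/(N₁N₂)) Σ_{ℓ∈Z_N²} exp(i(k₁ζ_{ℓ,1} + k₂ζ_{ℓ,2})) Φ₀(ℓ) for all k ∈ Λ. Then the dual objective J attains its infimum on ℒ₊: there exists q̂ ∈ ℒ₊ with J(q̂) ≤ J(q) for all q ∈ ℒ₊. -/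
open Complex BigOperators

noncomputable section

lemma lin_term (n₁ n₂ N₁ N₂ : ℕ) (σ : ℤ × ℤ → ℂ) (Φ₀ : ℕ × ℕ → ℝ)
    (hmom : MomentEq n₁ n₂ N₁ N₂ σ Φ₀) (q : ℤ × ℤ → ℂ) :
    (∑ k ∈ Lam n₁ n₂, q k * starRingEnd ℂ (σ k)) =
      ((1 / ((N₁ : ℝ) * (N₂ : ℝ)) : ℝ) : ℂ) * ∑ ℓ ∈ gridN N₁ N₂,
        ((Φ₀ ℓ : ℝ) : ℂ) * trigQ n₁ n₂ q (zeta N₁ N₂ ℓ) := by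
  have hc : ∀ k ∈ Lam n₁ n₂, starRingEnd ℂ (σ k) =
      ((1 / ((N₁ : ℝ) * (N₂ : ℝ)) : ℝ) : ℂ) * ∑ ℓ ∈ gridN N₁ N₂,
        Complex.exp (-Complex.I *
          (((k.1 : ℝ) * (zeta N₁ N₂ ℓ).1 + (k.2 : ℝ) * (zeta N₁ N₂ ℓ).2 : ℝ) : ℂ)) *
          ((Φ₀ ℓ : ℝ) : ℂ) := by
    intro k hk
    rw [hmom k hk, map_mul, Complex.conj_ofReal, map_sum]
    refine congrArg _ (Finset.sum_congr rfl fun ℓ _ => ?_)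
    rw [map_mul, Complex.conj_ofReal, ← Complex.exp_conj, map_mul, Complex.conj_I,
      Complex.conj_ofReal]
  rw [Finset.sum_congr rfl (fun k hk => by rw [hc k hk])]
  simp_rw [trigQ, Finset.mul_sum]
  rw [Finset.sum_comm]
  exact Finset.sum_congr rfl fun ℓ _ => Finset.sum_congr rfl fun k _ => by ring

/-- index type of the grid -/
abbrev gix (N₁ N₂ : ℕ) : Type := {ℓ : ℕ × ℕ // ℓ ∈ gridN N₁ N₂}

/-- the map to grid values -/
def Lmap (n₁ n₂ N₁ N₂ : ℕ) (q : ℤ × ℤ → ℂ) : gix N₁ N₂ → ℝ :=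
  fun ℓ => (trigQ n₁ n₂ q (zeta N₁ N₂ ℓ.1)).re

/-- the reduced objective -/
def Gfun (N₁ N₂ : ℕ) (Φ₀ Ψ : ℕ × ℕ → ℝ) (x : gix N₁ N₂ → ℝ) : ℝ :=
  ∑ ℓ : gix N₁ N₂, (Φ₀ ℓ.1 * x ℓ - Real.log (1 / Ψ ℓ.1 + x ℓ))

lemma Jdual_eq (n₁ n₂ N₁ N₂ : ℕ) (σ : ℤ × ℤ → ℂ) (Φ₀ Ψ : ℕ × ℕ → ℝ)
    (hmom : MomentEq n₁ n₂ N₁ N₂ σ Φ₀) (q : ℤ × ℤ → ℂ) :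
    Jdual n₁ n₂ N₁ N₂ σ Ψ q =
      (1 / ((N₁ : ℝ) * (N₂ : ℝ))) * Gfun N₁ N₂ Φ₀ Ψ (Lmap n₁ n₂ N₁ N₂ q) := by
  unfold Jdual
  rw [lin_term n₁ n₂ N₁ N₂ σ Φ₀ hmom q, Complex.re_ofReal_mul]
  have h1 : (∑ ℓ ∈ gridN N₁ N₂, ((Φ₀ ℓ : ℝ) : ℂ) * trigQ n₁ n₂ q (zeta N₁ N₂ ℓ)).re =
      ∑ ℓ ∈ gridN N₁ N₂, Φ₀ ℓ * (trigQ n₁ n₂ q (zeta N₁ N₂ ℓ)).re := by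
    rw [Complex.re_sum]
    exact Finset.sum_congr rfl fun ℓ _ => Complex.re_ofReal_mul _ _
  rw [h1]
  have h2 : Gfun N₁ N₂ Φ₀ Ψ (Lmap n₁ n₂ N₁ N₂ q) =
      ∑ ℓ ∈ gridN N₁ N₂, (Φ₀ ℓ * (trigQ n₁ n₂ q (zeta N₁ N₂ ℓ)).re -
        Real.log (1 / Ψ ℓ + (trigQ n₁ n₂ q (zeta N₁ N₂ ℓ)).re)) := by
    unfold Gfun Lmap
    exact Finset.sum_coe_sort (gridN N₁ N₂) (fun ℓ => Φ₀ ℓ * (trigQ n₁ n₂ q (zeta N₁ N₂ ℓ)).re -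
      Real.log (1 / Ψ ℓ + (trigQ n₁ n₂ q (zeta N₁ N₂ ℓ)).re))
  rw [h2, Finset.sum_sub_distrib, mul_sub]

/-- the admissible subspace -/
def Vsub (n₁ n₂ N₁ N₂ : ℕ) : Submodule ℝ (gix N₁ N₂ → ℝ) where
  carrier := {x | ∃ q, ConjSym n₁ n₂ q ∧ Lmap n₁ n₂ N₁ N₂ q = x}
  zero_mem' := ⟨fun _ => 0, fun k _ => by simp, by
    funext ℓ; simp [Lmap, trigQ]⟩
  add_mem' := by
    rintro x y ⟨q, hq, rfl⟩ ⟨r, hr, rfl⟩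
    refine ⟨fun k => q k + r k, fun k hk => by simp [hq k hk, hr k hk], ?_⟩
    funext ℓ
    simp [Lmap, trigQ, Finset.sum_add_distrib, add_mul]
  smul_mem' := by
    rintro t x ⟨q, hq, rfl⟩
    refine ⟨fun k => (t : ℂ) * q k, fun k hk => by
      show (t : ℂ) * q (-k) = starRingEnd ℂ ((t : ℂ) * q k)
      rw [map_mul, Complex.conj_ofReal, hq k hk], ?_⟩
    funext ℓ
    simp only [Lmap, trigQ, Pi.smul_apply, smul_eq_mul]
    simp_rw [mul_assoc]
    rw [← Finset.mul_sum, Complex.re_ofReal_mul]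

-- scalar lemmas
lemma log_le_lin (p u : ℝ) (hp : 0 < p) (hu : 0 < u) :
    Real.log u ≤ p / 2 * u + (Real.log (2 / p) - 1) := by
  have h2 : 0 < p / 2 * u := by positivity
  have h := Real.log_le_sub_one_of_pos h2
  rw [Real.log_mul (by positivity) hu.ne'] at h
  have hlog : Real.log (2 / p) = - Real.log (p / 2) := by
    rw [Real.log_div two_ne_zero hp.ne', Real.log_div hp.ne' two_ne_zero]; ring
  linarith

lemma f_lb (p s t : ℝ) (hp : 0 < p) (hs : 0 < s) (hu : 0 < 1 / s + t) :
    p / 2 * t - (p / (2 * s) + Real.log (2 / p) - 1) ≤ p * t - Real.log (1 / s + t) := by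
  have h := log_le_lin p (1 / s + t) hp hu
  have he : p / 2 * (1 / s + t) = p / (2 * s) + p / 2 * t := by ring
  linarith


theorem stmt14 (n₁ n₂ N₁ N₂ : ℕ) (hn₁ : 0 < n₁) (hn₂ : 0 < n₂)
    (hN₁ : 0 < N₁) (hN₂ : 0 < N₂)
    (σ : ℤ × ℤ → ℂ) (hσ : ConjSym n₁ n₂ σ)
    (Ψ : ℕ × ℕ → ℝ) (hΨ : ∀ ℓ ∈ gridN N₁ N₂, 0 < Ψ ℓ)
    -- the covariance data is generated by a strictly positive spectrum Φ₀
    (Φ₀ : ℕ × ℕ → ℝ) (hΦ₀ : ∀ ℓ ∈ gridN N₁ N₂, 0 < Φ₀ ℓ)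
    (hmom₀ : MomentEq n₁ n₂ N₁ N₂ σ Φ₀) :
    ∃ qhat : ℤ × ℤ → ℂ, Feas n₁ n₂ N₁ N₂ Ψ qhat ∧
      ∀ q : ℤ × ℤ → ℂ, Feas n₁ n₂ N₁ N₂ Ψ q →
        Jdual n₁ n₂ N₁ N₂ σ Ψ qhat ≤ Jdual n₁ n₂ N₁ N₂ σ Ψ q := by
  classical
  have hp : ∀ ℓ : gix N₁ N₂, 0 < Φ₀ ℓ.1 := fun ℓ => hΦ₀ ℓ.1 ℓ.2
  have hs : ∀ ℓ : gix N₁ N₂, 0 < Ψ ℓ.1 := fun ℓ => hΨ ℓ.1 ℓ.2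
  set G := Gfun N₁ N₂ Φ₀ Ψ with hGdef
  set K : gix N₁ N₂ → ℝ :=
    fun ℓ => Φ₀ ℓ.1 / (2 * Ψ ℓ.1) + Real.log (2 / Φ₀ ℓ.1) - 1 with hKdef
  set m : gix N₁ N₂ → ℝ :=
    fun ℓ => Φ₀ ℓ.1 / 2 * (-(1 / Ψ ℓ.1)) - K ℓ with hmdef
  set B : ℝ := G 0 with hBdef
  set C : gix N₁ N₂ → ℝ := fun ℓ => B - (∑ ℓ' : gix N₁ N₂, m ℓ') + m ℓ with hCdef
  set b : gix N₁ N₂ → ℝ := fun ℓ => 2 * (C ℓ + K ℓ) / Φ₀ ℓ.1 with hbdef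
  set a : gix N₁ N₂ → ℝ :=
    fun ℓ => Real.exp (Φ₀ ℓ.1 * (-(1 / Ψ ℓ.1)) - C ℓ) - 1 / Ψ ℓ.1 with hadef
  -- pointwise lower bound by m
  have hflb : ∀ (ℓ : gix N₁ N₂) (t : ℝ), 0 < 1 / Ψ ℓ.1 + t →
      m ℓ ≤ Φ₀ ℓ.1 * t - Real.log (1 / Ψ ℓ.1 + t) := by
    intro ℓ t ht
    have h1 := f_lb (Φ₀ ℓ.1) (Ψ ℓ.1) t (hp ℓ) (hs ℓ) ht
    have h2 : -(1 / Ψ ℓ.1) ≤ t := by linarith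
    have h3 : Φ₀ ℓ.1 / 2 * (-(1 / Ψ ℓ.1)) ≤ Φ₀ ℓ.1 / 2 * t :=
      mul_le_mul_of_nonneg_left h2 (by linarith [hp ℓ])
    have h4 : Φ₀ ℓ.1 / (2 * Ψ ℓ.1) = Φ₀ ℓ.1 / 2 * (1 / Ψ ℓ.1) := by ring
    simp only [hmdef, hKdef]
    linarith
  -- sublevel bound
  have hbound : ∀ x : gix N₁ N₂ → ℝ, (∀ ℓ, 0 < 1 / Ψ ℓ.1 + x ℓ) → G x ≤ B →
      ∀ ℓ, a ℓ ≤ x ℓ ∧ x ℓ ≤ b ℓ := by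
    intro x hx hGx ℓ
    have hfC : Φ₀ ℓ.1 * x ℓ - Real.log (1 / Ψ ℓ.1 + x ℓ) ≤ C ℓ := by
      have hsplit : (Φ₀ ℓ.1 * x ℓ - Real.log (1 / Ψ ℓ.1 + x ℓ)) +
          ∑ ℓ' ∈ Finset.univ.erase ℓ, (Φ₀ ℓ'.1 * x ℓ' - Real.log (1 / Ψ ℓ'.1 + x ℓ')) = G x := by
        show _ = Gfun N₁ N₂ Φ₀ Ψ x
        unfold Gfun
        exact Finset.add_sum_erase _
          (fun ℓ' => Φ₀ ℓ'.1 * x ℓ' - Real.log (1 / Ψ ℓ'.1 + x ℓ')) (Finset.mem_univ ℓ)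
      have hge : ∑ ℓ' ∈ Finset.univ.erase ℓ, m ℓ' ≤
          ∑ ℓ' ∈ Finset.univ.erase ℓ, (Φ₀ ℓ'.1 * x ℓ' - Real.log (1 / Ψ ℓ'.1 + x ℓ')) :=
        Finset.sum_le_sum fun ℓ' _ => hflb ℓ' (x ℓ') (hx ℓ')
      have hmsplit : m ℓ + ∑ ℓ' ∈ Finset.univ.erase ℓ, m ℓ' = ∑ ℓ' : gix N₁ N₂, m ℓ' :=
        Finset.add_sum_erase _ _ (Finset.mem_univ ℓ)
      simp only [hCdef]
      rw [← hmsplit]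
      linarith
    constructor
    · have h2 : -(1 / Ψ ℓ.1) ≤ x ℓ := by linarith [hx ℓ]
      have h3 : Φ₀ ℓ.1 * (-(1 / Ψ ℓ.1)) ≤ Φ₀ ℓ.1 * x ℓ :=
        mul_le_mul_of_nonneg_left h2 (hp ℓ).le
      have hlog : Φ₀ ℓ.1 * (-(1 / Ψ ℓ.1)) - C ℓ ≤ Real.log (1 / Ψ ℓ.1 + x ℓ) := by linarith
      have hexp : Real.exp (Φ₀ ℓ.1 * (-(1 / Ψ ℓ.1)) - C ℓ) ≤ 1 / Ψ ℓ.1 + x ℓ := by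
        calc Real.exp (Φ₀ ℓ.1 * (-(1 / Ψ ℓ.1)) - C ℓ)
            ≤ Real.exp (Real.log (1 / Ψ ℓ.1 + x ℓ)) := Real.exp_le_exp.mpr hlog
          _ = 1 / Ψ ℓ.1 + x ℓ := Real.exp_log (hx ℓ)
      simp only [hadef]; linarith
    · have h1 := f_lb (Φ₀ ℓ.1) (Ψ ℓ.1) (x ℓ) (hp ℓ) (hs ℓ) (hx ℓ)
      have h4 : Φ₀ ℓ.1 / (2 * Ψ ℓ.1) = Φ₀ ℓ.1 / 2 * (1 / Ψ ℓ.1) := by ring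
      have hKeq : Φ₀ ℓ.1 / (2 * Ψ ℓ.1) + Real.log (2 / Φ₀ ℓ.1) - 1 = K ℓ := by
        rw [hKdef]
      have h5 : Φ₀ ℓ.1 / 2 * x ℓ ≤ C ℓ + K ℓ := by linarith
      simp only [hbdef]
      rw [le_div_iff₀ (hp ℓ)]
      have h6 : x ℓ * Φ₀ ℓ.1 = 2 * (Φ₀ ℓ.1 / 2 * x ℓ) := by ring
      rw [h6]
      exact mul_le_mul_of_nonneg_left h5 (by norm_num)
  -- positivity on the box
  have hapos : ∀ ℓ : gix N₁ N₂, ∀ t : ℝ, a ℓ ≤ t → 0 < 1 / Ψ ℓ.1 + t := by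
    intro ℓ t ht
    have : (0:ℝ) < Real.exp (Φ₀ ℓ.1 * (-(1 / Ψ ℓ.1)) - C ℓ) := Real.exp_pos _
    simp only [hadef] at ht; linarith
  -- the compact set
  set S : Set (gix N₁ N₂ → ℝ) :=
    (Vsub n₁ n₂ N₁ N₂ : Set (gix N₁ N₂ → ℝ)) ∩
      Set.pi Set.univ (fun ℓ => Set.Icc (a ℓ) (b ℓ)) with hSdef
  have hScompact : IsCompact S :=
    (isCompact_univ_pi fun ℓ => isCompact_Icc).inter_left
      (Submodule.closed_of_finiteDimensional _)
  have h0pos : ∀ ℓ : gix N₁ N₂, 0 < 1 / Ψ ℓ.1 + (0 : gix N₁ N₂ → ℝ) ℓ := by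
    intro ℓ; simp only [Pi.zero_apply, add_zero]; exact one_div_pos.mpr (hs ℓ)
  have h0bd := hbound 0 h0pos (le_of_eq hBdef.symm)
  have hS0 : (0 : gix N₁ N₂ → ℝ) ∈ S := by
    refine ⟨(Vsub n₁ n₂ N₁ N₂).zero_mem, fun ℓ _ => ?_⟩
    exact ⟨(h0bd ℓ).1, (h0bd ℓ).2⟩
  have hGc : ContinuousOn G S := by
    rw [hGdef]
    unfold Gfun
    apply continuousOn_finset_sum
    intro ℓ _
    apply ContinuousOn.sub
    · exact (continuous_const.mul (continuous_apply ℓ)).continuousOn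
    · apply ContinuousOn.log
      · exact (continuous_const.add (continuous_apply ℓ)).continuousOn
      · intro x hx
        exact (hapos ℓ (x ℓ) ((hx.2 ℓ (Set.mem_univ ℓ)).1)).ne'
  obtain ⟨xh, hxhS, hminS⟩ := hScompact.exists_isMinOn ⟨0, hS0⟩ hGc
  have hGmin : ∀ x : gix N₁ N₂ → ℝ, x ∈ (Vsub n₁ n₂ N₁ N₂ : Set (gix N₁ N₂ → ℝ)) →
      (∀ ℓ, 0 < 1 / Ψ ℓ.1 + x ℓ) → G xh ≤ G x := by
    intro x hxV hxpos
    rcases le_total (G x) B with h | h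
    · exact hminS ⟨hxV, fun ℓ _ => ⟨(hbound x hxpos h ℓ).1, (hbound x hxpos h ℓ).2⟩⟩
    · exact le_trans (hminS hS0) h
  obtain ⟨qh, hqhconj, hqhL⟩ := hxhS.1
  refine ⟨qh, ⟨hqhconj, ?_⟩, ?_⟩
  · intro ℓ hℓ
    have h1 := hapos ⟨ℓ, hℓ⟩ (xh ⟨ℓ, hℓ⟩) ((hxhS.2 ⟨ℓ, hℓ⟩ (Set.mem_univ _)).1)
    have h2 : (trigQ n₁ n₂ qh (zeta N₁ N₂ ℓ)).re = xh ⟨ℓ, hℓ⟩ := congrFun hqhL ⟨ℓ, hℓ⟩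
    rw [h2]; exact h1
  · intro q hq
    rw [Jdual_eq n₁ n₂ N₁ N₂ σ Φ₀ Ψ hmom₀ q, Jdual_eq n₁ n₂ N₁ N₂ σ Φ₀ Ψ hmom₀ qh, hqhL]
    have hN : (0:ℝ) ≤ 1 / ((N₁:ℝ) * (N₂:ℝ)) := by positivity
    refine mul_le_mul_of_nonneg_left ?_ hN
    exact hGmin (Lmap n₁ n₂ N₁ N₂ q) ⟨q, hq.1, rfl⟩ (fun ℓ => hq.2 ℓ.1 ℓ.2)

end
end
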